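/- arXiv:1712.03006 — 2 statements merged into one kernel-verified Lean document; each statement's English description precedes it below -/
import Mathlib

section
/- Let q ∈ ℂ× with q ≠ ±1 and fix i ∈ {1,…,n}. If D is a twisted derivation of the polynomial ring ℂ[x₁,…,xₙ] relative to the automorphism γ_{q,x_i}, then D equals the composition of the q-derivative ∂_{q,x_i} followed by multiplication by the polynomial f_i = D(x_i); in particular D(x_j) = 0 for all j ≠ i. -/
open MvPolynomial

/-- The `q`-integer `[m]_q = (q^m − q^{−m})/(q − q^{−1})`. -/
noncomputable def qNum (q : ℂ) (m : ℕ) : ℂ := (q ^ m - q⁻¹ ^ m) / (q - q⁻¹)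

/-- The operator `∂_{q,x_u}` on `ℂ[x_1,…,x_n]`, acting on a monomial `x^α` by
`[α_u]_q · x^{α − e_u}` (zero if `α_u = 0`). -/
noncomputable def delOp {σ : Type*} [DecidableEq σ] (q : ℂ) (u : σ) :
    Module.End ℂ (MvPolynomial σ ℂ) :=
  (basisMonomials σ ℂ).constr ℂ fun m => qNum q (m u) • monomial (m - Finsupp.single u 1) 1

lemma delOp_monomial {σ : Type*} [DecidableEq σ] (q : ℂ) (u : σ) (m : σ →₀ ℕ) (a : ℂ) :
    delOp q u (monomial m a) = a • (qNum q (m u) • monomial (m - Finsupp.single u 1) 1) := by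
  have h1 : monomial m a = a • monomial m 1 := by
    rw [smul_monomial, smul_eq_mul, mul_one]
  rw [h1, map_smul, delOp]
  congr 1
  have : (monomial m 1 : MvPolynomial σ ℂ) = basisMonomials σ ℂ m := by
    rw [coe_basisMonomials]
  rw [this, Module.Basis.constr_basis]

-- aut on monomials
lemma aut_monomial {n : ℕ} (c : ℂ) (i : Fin n)
    (φ : MvPolynomial (Fin n) ℂ →ₐ[ℂ] MvPolynomial (Fin n) ℂ)
    (hφ : ∀ j : Fin n, φ (X j) = if j = i then c • X j else X j)
    (m : Fin n →₀ ℕ) (a : ℂ) :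
    φ (monomial m a) = c ^ (m i) • monomial m a := by
  induction m using Finsupp.induction with
  | zero => simp [monomial_zero', algHom_C]
  | single_add j k m hjm hk ih =>
    have hmono : (monomial (Finsupp.single j k + m) a : MvPolynomial (Fin n) ℂ)
        = X j ^ k * monomial m a := by
      rw [X_pow_eq_monomial, monomial_mul, one_mul]
    rw [hmono, map_mul, map_pow, hφ, ih]
    by_cases hji : j = i
    · subst hji
      simp only [smul_pow, Finsupp.add_apply, Finsupp.single_apply, eq_self_iff_true, if_true,
        smul_eq_C_mul, map_pow, map_mul, mul_pow, pow_add]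
      ring
    · simp only [if_neg hji, Finsupp.add_apply, Finsupp.single_apply, if_neg hji,
        smul_eq_C_mul, map_pow]
      ring

lemma qNum_zero (q : ℂ) : qNum q 0 = 0 := by simp [qNum]

lemma qNum_one (q : ℂ) (hd : q - q⁻¹ ≠ 0) : qNum q 1 = 1 := by
  simp [qNum, div_self hd]

lemma qNum_succ (q : ℂ) (hd : q - q⁻¹ ≠ 0) (m : ℕ) :
    qNum q (m + 1) = q * qNum q m + q⁻¹ ^ m := by
  unfold qNum
  rw [div_eq_iff hd, add_mul, mul_comm q ((q ^ m - q⁻¹ ^ m) / (q - q⁻¹)), mul_right_comm,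
    div_mul_cancel₀ _ hd]
  ring

/-- every twisted derivation of `ℂ[x_1,…,x_n]` relative to `γ_{q,x_i}` equals
the `q`-derivative `∂_{q,x_i}` followed by multiplication by `f_i = D(x_i)`; in particular
`D(x_j) = 0` for `j ≠ i`. Here `γ_{q,x_i}` is the algebra automorphism determined by
`x_i ↦ q·x_i`, `x_j ↦ x_j` for `j ≠ i`. -/
theorem twisted_derivation_polynomial_eq_qDerivative
    (n : ℕ) (q : ℂ) (hq0 : q ≠ 0) (hq1 : q ≠ 1) (hqm1 : q ≠ -1) (i : Fin n)
    (γ : MvPolynomial (Fin n) ℂ ≃ₐ[ℂ] MvPolynomial (Fin n) ℂ)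
    (hγ : ∀ j : Fin n, γ (X j) = if j = i then q • X j else X j)
    (D : MvPolynomial (Fin n) ℂ →ₗ[ℂ] MvPolynomial (Fin n) ℂ)
    (hD : ∀ a b : MvPolynomial (Fin n) ℂ, D (a * b) = D a * γ b + γ.symm a * D b) :
    (∀ j : Fin n, j ≠ i → D (X j) = 0) ∧
      ∀ f : MvPolynomial (Fin n) ℂ, D f = D (X i) * delOp q i f := by
  have hd : q - q⁻¹ ≠ 0 := by
    intro h
    rw [sub_eq_zero] at h
    have h2 : q * q = 1 := by nth_rewrite 2 [h]; exact mul_inv_cancel₀ hq0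
    rcases mul_self_eq_one_iff.mp h2 with h3 | h3
    · exact hq1 h3
    · exact hqm1 h3
  have hγi : γ (X i) = q • X i := by simpa using hγ i
  have hγs : ∀ j : Fin n, γ.symm (X j) = if j = i then q⁻¹ • X j else X j := by
    intro j
    by_cases hj : j = i
    · subst hj
      rw [if_pos rfl]
      apply γ.injective
      rw [AlgEquiv.apply_symm_apply, map_smul, hγi, smul_smul, inv_mul_cancel₀ hq0, one_smul]
    · rw [if_neg hj]
      have h := hγ j
      rw [if_neg hj] at h
      exact (AlgEquiv.symm_apply_eq γ).mpr h.symm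
  have hγm : ∀ (m : Fin n →₀ ℕ) (a : ℂ), γ (monomial m a) = q ^ (m i) • monomial m a := by
    intro m a
    exact aut_monomial q i γ.toAlgHom (fun j => by simpa using hγ j) m a
  have hγsm : ∀ (m : Fin n →₀ ℕ) (a : ℂ),
      γ.symm (monomial m a) = q⁻¹ ^ (m i) • monomial m a := by
    intro m a
    exact aut_monomial q⁻¹ i γ.symm.toAlgHom (fun j => by simpa using hγs j) m a
  have hD1 : D 1 = 0 := by
    have h := hD 1 1
    simp only [mul_one, map_one, one_mul] at h
    exact (left_eq_add.mp h)
  have hDC : ∀ a : ℂ, D (C a) = 0 := by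
    intro a
    have hca : (C a : MvPolynomial (Fin n) ℂ) = a • 1 := by rw [smul_eq_C_mul, mul_one]
    rw [hca, map_smul, hD1, smul_zero]
  have hDXne : ∀ j : Fin n, j ≠ i → D (X j) = 0 := by
    intro j hj
    have h1 := hD (X i) (X j)
    have h2 := hD (X j) (X i)
    rw [mul_comm (X j) (X i)] at h2
    have heq := h1.symm.trans h2
    rw [hγ j, if_neg hj, hγi, hγs i, if_pos rfl, hγs j, if_neg hj] at heq
    simp only [smul_eq_C_mul] at heq
    have hz : (C q⁻¹ - C q) * (X i * D (X j)) = 0 := by linear_combination heq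
    have hc : (C q⁻¹ - C q : MvPolynomial (Fin n) ℂ) ≠ 0 := by
      rw [sub_ne_zero]
      intro h
      exact hd (by rw [sub_eq_zero]; exact (C_injective _ ℂ h).symm)
    rcases mul_eq_zero.mp hz with h | h
    · exact absurd h hc
    · rcases mul_eq_zero.mp h with h' | h'
      · exact absurd h' (X_ne_zero i)
      · exact h'
  have hdelX : ∀ j : Fin n, delOp q i (X j) = if j = i then 1 else 0 := by
    intro j
    have hx : (X j : MvPolynomial (Fin n) ℂ) = monomial (Finsupp.single j 1) 1 := by
      rw [← C_mul_X_eq_monomial, map_one, one_mul]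
    rw [hx, delOp_monomial, one_smul]
    by_cases hj : j = i
    · subst hj
      rw [if_pos rfl]
      simp [qNum_one q hd, monomial_zero']
    · rw [if_neg hj]
      rw [Finsupp.single_apply, if_neg hj, qNum_zero, zero_smul]
  have hDX : ∀ j : Fin n, D (X j) = D (X i) * delOp q i (X j) := by
    intro j
    by_cases hj : j = i
    · rw [hj, hdelX i, if_pos rfl, mul_one]
    · rw [hDXne j hj, hdelX, if_neg hj, mul_zero]
  have hkey : ∀ (j : Fin n) (p : MvPolynomial (Fin n) ℂ),
      delOp q i (p * X j) = delOp q i p * γ (X j) + γ.symm p * delOp q i (X j) := by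
    intro j p
    induction p using MvPolynomial.induction_on' with
    | monomial m a =>
      rw [hγ j, hdelX j, hγsm]
      have hmm : monomial m a * X j = monomial (m + Finsupp.single j 1) a := by
        rw [monomial_add_single, pow_one]
      by_cases hj : j = i
      · rw [hj] at hmm ⊢
        simp only [eq_self_iff_true, if_true, mul_one]
        rw [hmm, delOp_monomial, delOp_monomial]
        have h1 : ((m + Finsupp.single i 1) : Fin n →₀ ℕ) i = m i + 1 := by
          simp [Finsupp.add_apply, Finsupp.single_apply]
        have h2 : (m + Finsupp.single i 1) - Finsupp.single i 1 = m := by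
          ext k
          simp only [Finsupp.tsub_apply, Finsupp.add_apply]
          omega
        rw [h1, h2]
        have hma : (monomial m a : MvPolynomial (Fin n) ℂ) = C a * monomial m 1 := by
          rw [C_mul_monomial, mul_one]
        by_cases h0 : m i = 0
        · rw [h0, qNum_zero, qNum_one q hd, zero_smul, smul_zero, zero_mul, zero_add,
            pow_zero, one_smul, one_smul, smul_monomial, smul_eq_mul, mul_one]
        · have hle : Finsupp.single i 1 ≤ m :=
            Finsupp.single_le_iff.mpr (Nat.one_le_iff_ne_zero.mpr h0)
          have h3 : (monomial (m - Finsupp.single i 1) (1:ℂ)) * X i = monomial m 1 := by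
            rw [← pow_one (X i : MvPolynomial (Fin n) ℂ), ← monomial_add_single,
              tsub_add_cancel_of_le hle]
          rw [qNum_succ q hd]
          simp only [smul_eq_C_mul, map_add, map_mul, hma]
          linear_combination (-(C a * C (qNum q (m i)) * C q)) * h3
      · simp only [if_neg hj, mul_zero, add_zero]
        rw [hmm, delOp_monomial, delOp_monomial]
        have h1 : ((m + Finsupp.single j 1) : Fin n →₀ ℕ) i = m i := by
          simp [Finsupp.add_apply, Finsupp.single_apply, hj]
        have h2 : (m + Finsupp.single j 1) - Finsupp.single i 1
            = (m - Finsupp.single i 1) + Finsupp.single j 1 := by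
          ext k
          simp only [Finsupp.tsub_apply, Finsupp.add_apply, Finsupp.single_apply]
          by_cases hik : i = k
          · have hjk : ¬ j = k := fun h => hj (h.trans hik.symm)
            simp only [if_pos hik, if_neg hjk]
            omega
          · simp only [if_neg hik]
            omega
        rw [h1, h2]
        have h3 : (monomial ((m - Finsupp.single i 1) + Finsupp.single j 1) (1:ℂ))
            = monomial (m - Finsupp.single i 1) 1 * X j := by
          rw [monomial_add_single, pow_one]
        rw [h3, smul_mul_assoc, smul_mul_assoc]
    | add p1 p2 ih1 ih2 =>
      simp only [add_mul, map_add, ih1, ih2]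
      ring
  refine ⟨hDXne, ?_⟩
  intro f
  induction f using MvPolynomial.induction_on with
  | C a =>
    have hca : (C a : MvPolynomial (Fin n) ℂ) = monomial 0 a := by rw [monomial_zero']
    rw [hDC, hca, delOp_monomial]
    simp [qNum_zero]
  | add p1 p2 ih1 ih2 => rw [map_add, map_add, ih1, ih2, mul_add]
  | mul_X p j ih => rw [hD p (X j), hkey j p, ih, hDX j]; ring
end

section
/- Let q ∈ ℂ× be not a root of unity and let ℂ_q[x,y,z] be the quotient of the free unital associative ℂ-algebra on x, y, z by the two-sided ideal generated by xz − q²zx, xy − yx + q(q² − q⁻²)z², yz − q⁻²zy. Then the center of ℂ_q[x,y,z] equals the unital subalgebra generated by the element p_q = q⁻¹xy + q²z²; i.e., Z(ℂ_q[x,y,z]) is exactly the set of polynomial expressions in p_q. -/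
/-- Generators `x`, `y`, `z`. -/
inductive XYZ : Type
  | x : XYZ
  | y : XYZ
  | z : XYZ

namespace CqXYZ

noncomputable def x : FreeAlgebra ℂ XYZ := FreeAlgebra.ι ℂ XYZ.x
noncomputable def y : FreeAlgebra ℂ XYZ := FreeAlgebra.ι ℂ XYZ.y
noncomputable def z : FreeAlgebra ℂ XYZ := FreeAlgebra.ι ℂ XYZ.z

/-- The defining relations of `ℂ_q[x,y,z]`:
`xz = q²zx`, `xy = yx − q(q² − q⁻²)z²`, `yz = q⁻²zy`. -/
inductive rel (q : ℂ) : FreeAlgebra ℂ XYZ → FreeAlgebra ℂ XYZ → Prop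
  | xz : rel q (x * z) (q ^ 2 • (z * x))
  | xy : rel q (x * y) (y * x - (q * (q ^ 2 - q⁻¹ ^ 2)) • (z * z))
  | yz : rel q (y * z) (q⁻¹ ^ 2 • (z * y))

/-- `ℂ_q[x,y,z] = ℂ⟨x,y,z⟩/(xz − q²zx, xy − yx + q(q² − q⁻²)z², yz − q⁻²zy)`. -/
abbrev Cq (q : ℂ) := RingQuot (rel q)

noncomputable def X (q : ℂ) : Cq q := RingQuot.mkAlgHom ℂ (rel q) x
noncomputable def Y (q : ℂ) : Cq q := RingQuot.mkAlgHom ℂ (rel q) y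
noncomputable def Z (q : ℂ) : Cq q := RingQuot.mkAlgHom ℂ (rel q) z

/-- `p_q = q⁻¹xy + q²z²`. -/
noncomputable def pq (q : ℂ) : Cq q := q⁻¹ • (X q * Y q) + q ^ 2 • (Z q * Z q)

end CqXYZ

namespace CqProof

abbrev Idx := ℕ × ℕ × ℕ
abbrev V := Idx →₀ ℂ

open Finsupp

lemma lc_apply (F : Idx → V) (f : Idx →₀ ℂ) (P p₀ : Idx) (c₀ : ℂ)
    (h : ∀ p, F p P = if p = p₀ then c₀ else 0) :
    Finsupp.linearCombination ℂ F f P = f p₀ * c₀ := by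
  rw [Finsupp.linearCombination_apply, Finsupp.sum_apply, Finsupp.sum,
    Finset.sum_eq_single p₀]
  · rw [Finsupp.smul_apply, h p₀, if_pos rfl, smul_eq_mul]
  · intro b _ hne
    rw [Finsupp.smul_apply, h b, if_neg hne, smul_zero]
  · intro hnot
    simp [Finsupp.notMem_support_iff.mp hnot]

lemma lc_apply0 (F : Idx → V) (f : Idx →₀ ℂ) (P : Idx)
    (h : ∀ p, F p P = 0) :
    Finsupp.linearCombination ℂ F f P = 0 := by
  rw [Finsupp.linearCombination_apply, Finsupp.sum_apply, Finsupp.sum]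
  apply Finset.sum_eq_zero
  intro p _
  rw [Finsupp.smul_apply, h p, smul_zero]

variable (q : ℂ)

noncomputable def βc (b : ℕ) : ℂ := q⁻¹ * (q ^ (4*b) - 1)
noncomputable def γc (c : ℕ) : ℂ := q ^ 3 * (1 - q⁻¹ ^ (4*c))

noncomputable def Zop : V →ₗ[ℂ] V :=
  Finsupp.linearCombination ℂ fun p => Finsupp.single (p.1+1, p.2.1, p.2.2) 1
noncomputable def Xop : V →ₗ[ℂ] V :=
  Finsupp.linearCombination ℂ fun p => Finsupp.single (p.1, p.2.1+1, p.2.2) (q ^ (2*p.1))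
noncomputable def Yop1 : V →ₗ[ℂ] V :=
  Finsupp.linearCombination ℂ fun p => Finsupp.single (p.1, p.2.1, p.2.2+1) (q⁻¹ ^ (2*p.1))
noncomputable def Yop2 : V →ₗ[ℂ] V :=
  Finsupp.linearCombination ℂ fun p =>
    Finsupp.single (p.1+2, p.2.1-1, p.2.2) (q⁻¹ ^ (2*p.1) * βc q p.2.1)
noncomputable def Yop : V →ₗ[ℂ] V := Yop1 q + Yop2 q

noncomputable def Zr : V →ₗ[ℂ] V :=
  Finsupp.linearCombination ℂ fun p =>
    Finsupp.single (p.1+1, p.2.1, p.2.2) (q ^ (2*p.2.1) * q⁻¹ ^ (2*p.2.2))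
noncomputable def Xr1 : V →ₗ[ℂ] V :=
  Finsupp.linearCombination ℂ fun p => Finsupp.single (p.1, p.2.1+1, p.2.2) 1
noncomputable def Xr2 : V →ₗ[ℂ] V :=
  Finsupp.linearCombination ℂ fun p =>
    Finsupp.single (p.1+2, p.2.1, p.2.2-1) (q ^ (4*p.2.1) * γc q p.2.2)
noncomputable def Xr : V →ₗ[ℂ] V := Xr1 + Xr2 q
noncomputable def Yr : V →ₗ[ℂ] V :=
  Finsupp.linearCombination ℂ fun p => Finsupp.single (p.1, p.2.1, p.2.2+1) 1

-- single lemmas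
lemma Zop_single (p : Idx) (r : ℂ) :
    Zop (Finsupp.single p r) = Finsupp.single (p.1+1, p.2.1, p.2.2) r := by
  rw [Zop, Finsupp.linearCombination_single, Finsupp.smul_single, smul_eq_mul, mul_one]

lemma Xop_single (p : Idx) (r : ℂ) :
    Xop q (Finsupp.single p r) = Finsupp.single (p.1, p.2.1+1, p.2.2) (r * q ^ (2*p.1)) := by
  rw [Xop, Finsupp.linearCombination_single, Finsupp.smul_single, smul_eq_mul]

lemma Yop_single (p : Idx) (r : ℂ) :
    Yop q (Finsupp.single p r) = Finsupp.single (p.1, p.2.1, p.2.2+1) (r * q⁻¹ ^ (2*p.1))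
      + Finsupp.single (p.1+2, p.2.1-1, p.2.2) (r * (q⁻¹ ^ (2*p.1) * βc q p.2.1)) := by
  rw [Yop, LinearMap.add_apply, Yop1, Yop2, Finsupp.linearCombination_single,
    Finsupp.linearCombination_single, Finsupp.smul_single, Finsupp.smul_single,
    smul_eq_mul, smul_eq_mul]

-- apply lemmas
lemma Zop_apply_succ (f : V) (A B C : ℕ) : Zop f (A+1, B, C) = f (A, B, C) := by
  rw [Zop, lc_apply _ f _ (A,B,C) 1, mul_one]
  rintro ⟨a,b,c⟩
  by_cases h : a = A ∧ b = B ∧ c = C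
  · obtain ⟨rfl, rfl, rfl⟩ := h; simp
  · rw [Finsupp.single_apply, if_neg, if_neg] <;> simp [Prod.ext_iff] <;> omega

lemma Zop_apply_zero (f : V) (B C : ℕ) : Zop f (0, B, C) = 0 := by
  rw [Zop, lc_apply0]
  rintro ⟨a,b,c⟩
  rw [Finsupp.single_apply, if_neg]
  simp [Prod.ext_iff]

lemma Xop_apply_succ (f : V) (A B C : ℕ) : Xop q f (A, B+1, C) = q ^ (2*A) * f (A, B, C) := by
  rw [Xop, lc_apply _ f _ (A,B,C) (q ^ (2*A)), mul_comm]
  rintro ⟨a,b,c⟩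
  by_cases h : a = A ∧ b = B ∧ c = C
  · obtain ⟨rfl, rfl, rfl⟩ := h; simp
  · rw [Finsupp.single_apply, if_neg, if_neg] <;> simp [Prod.ext_iff] <;> omega

lemma Xop_apply_zero (f : V) (A C : ℕ) : Xop q f (A, 0, C) = 0 := by
  rw [Xop, lc_apply0]
  rintro ⟨a,b,c⟩
  rw [Finsupp.single_apply, if_neg]
  simp [Prod.ext_iff]

lemma Yop1_apply_succ (f : V) (A B C : ℕ) :
    Yop1 q f (A, B, C+1) = q⁻¹ ^ (2*A) * f (A, B, C) := by
  rw [Yop1, lc_apply _ f _ (A,B,C) (q⁻¹ ^ (2*A)), mul_comm]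
  rintro ⟨a,b,c⟩
  by_cases h : a = A ∧ b = B ∧ c = C
  · obtain ⟨rfl, rfl, rfl⟩ := h; simp
  · rw [Finsupp.single_apply, if_neg, if_neg] <;> simp [Prod.ext_iff] <;> omega

lemma Yop1_apply_zero (f : V) (A B : ℕ) : Yop1 q f (A, B, 0) = 0 := by
  rw [Yop1, lc_apply0]
  rintro ⟨a,b,c⟩
  rw [Finsupp.single_apply, if_neg]
  simp [Prod.ext_iff]

lemma Yop2_apply_succ (f : V) (A B C : ℕ) :
    Yop2 q f (A+2, B, C) = q⁻¹ ^ (2*A) * βc q (B+1) * f (A, B+1, C) := by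
  rw [Yop2, lc_apply _ f _ (A,B+1,C) (q⁻¹ ^ (2*A) * βc q (B+1)), mul_comm]
  rintro ⟨a,b,c⟩
  by_cases h : a = A ∧ b = B+1 ∧ c = C
  · obtain ⟨rfl, rfl, rfl⟩ := h; simp
  · rw [if_neg (by simp [Prod.ext_iff]; omega), Finsupp.single_apply]
    by_cases h2 : a = A ∧ b - 1 = B ∧ c = C
    · have hb : b = 0 ∧ B = 0 := by omega
      rw [if_pos (by simp [Prod.ext_iff]; omega)]
      rw [hb.1]
      simp [βc]
    · rw [if_neg (by simp [Prod.ext_iff]; omega)]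

lemma Yop2_apply_zero (f : V) (B C : ℕ) : Yop2 q f (0, B, C) = 0 := by
  rw [Yop2, lc_apply0]
  rintro ⟨a,b,c⟩
  rw [Finsupp.single_apply, if_neg]
  simp [Prod.ext_iff]

lemma Yop2_apply_one (f : V) (B C : ℕ) : Yop2 q f (1, B, C) = 0 := by
  rw [Yop2, lc_apply0]
  rintro ⟨a,b,c⟩
  rw [Finsupp.single_apply, if_neg]
  simp [Prod.ext_iff]

lemma Zr_apply_succ (f : V) (A B C : ℕ) :
    Zr q f (A+1, B, C) = q ^ (2*B) * q⁻¹ ^ (2*C) * f (A, B, C) := by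
  rw [Zr, lc_apply _ f _ (A,B,C) (q ^ (2*B) * q⁻¹ ^ (2*C)), mul_comm]
  rintro ⟨a,b,c⟩
  by_cases h : a = A ∧ b = B ∧ c = C
  · obtain ⟨rfl, rfl, rfl⟩ := h; simp
  · rw [Finsupp.single_apply, if_neg, if_neg] <;> simp [Prod.ext_iff] <;> omega

lemma Xr1_apply_succ (f : V) (A B C : ℕ) : Xr1 f (A, B+1, C) = f (A, B, C) := by
  rw [Xr1, lc_apply _ f _ (A,B,C) 1, mul_one]
  rintro ⟨a,b,c⟩
  by_cases h : a = A ∧ b = B ∧ c = C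
  · obtain ⟨rfl, rfl, rfl⟩ := h; simp
  · rw [Finsupp.single_apply, if_neg, if_neg] <;> simp [Prod.ext_iff] <;> omega

lemma Xr2_apply_succ (f : V) (A B C : ℕ) :
    Xr2 q f (A+2, B, C) = q ^ (4*B) * γc q (C+1) * f (A, B, C+1) := by
  rw [Xr2, lc_apply _ f _ (A,B,C+1) (q ^ (4*B) * γc q (C+1)), mul_comm]
  rintro ⟨a,b,c⟩
  by_cases h : a = A ∧ b = B ∧ c = C+1
  · obtain ⟨rfl, rfl, rfl⟩ := h; simp
  · rw [if_neg (by simp [Prod.ext_iff]; omega), Finsupp.single_apply]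
    by_cases h2 : a = A ∧ b = B ∧ c - 1 = C
    · have hc : c = 0 ∧ C = 0 := by omega
      rw [if_pos (by simp [Prod.ext_iff]; omega)]
      rw [hc.1]
      simp [γc]
    · rw [if_neg (by simp [Prod.ext_iff]; omega)]

lemma Xr2_apply_zero (f : V) (B C : ℕ) : Xr2 q f (0, B, C) = 0 := by
  rw [Xr2, lc_apply0]
  rintro ⟨a,b,c⟩
  rw [Finsupp.single_apply, if_neg]
  simp [Prod.ext_iff]

lemma Xr2_apply_one (f : V) (B C : ℕ) : Xr2 q f (1, B, C) = 0 := by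
  rw [Xr2, lc_apply0]
  rintro ⟨a,b,c⟩
  rw [Finsupp.single_apply, if_neg]
  simp [Prod.ext_iff]


open CqXYZ

noncomputable def ρfree : FreeAlgebra ℂ XYZ →ₐ[ℂ] Module.End ℂ V :=
  FreeAlgebra.lift ℂ fun t => match t with
    | XYZ.x => Xop q
    | XYZ.y => Yop q
    | XYZ.z => Zop

lemma ρfree_x : ρfree q x = Xop q := FreeAlgebra.lift_ι_apply _ _
lemma ρfree_y : ρfree q y = Yop q := FreeAlgebra.lift_ι_apply _ _
lemma ρfree_z : ρfree q z = Zop := FreeAlgebra.lift_ι_apply _ _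

lemma relhold (hq0 : q ≠ 0) : ∀ ⦃a b⦄, rel q a b → ρfree q a = ρfree q b := by
  have hinv : q⁻¹ * q = 1 := inv_mul_cancel₀ hq0
  intro a b h
  cases h with
  | xz =>
    rw [map_mul, map_smul, map_mul, ρfree_x, ρfree_z]
    apply Finsupp.lhom_ext
    rintro ⟨a, b, c⟩ r
    simp only [Module.End.mul_apply, LinearMap.smul_apply, Zop_single, Xop_single,
      Finsupp.smul_single, smul_eq_mul]
    rw [show a + 1 = a + 1 from rfl]
    congr 1
    ring
  | yz =>
    rw [map_mul, map_smul, map_mul, ρfree_y, ρfree_z]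
    apply Finsupp.lhom_ext
    rintro ⟨a, b, c⟩ r
    simp only [Module.End.mul_apply, LinearMap.smul_apply, map_add, Zop_single, Yop_single,
      smul_add, Finsupp.smul_single, smul_eq_mul]
    congr 1
    · congr 1; ring
    · congr 1; ring
  | xy =>
    rw [map_mul, map_sub, map_smul, map_mul, map_mul, ρfree_x, ρfree_y, ρfree_z]
    apply Finsupp.lhom_ext
    rintro ⟨a, b, c⟩ r
    simp only [Module.End.mul_apply, LinearMap.sub_apply, LinearMap.smul_apply, Zop_single,
      Xop_single, Yop_single, Finsupp.smul_single, smul_add, map_add, smul_eq_mul,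
      Nat.add_sub_cancel]
    rw [add_sub_assoc, ← Finsupp.single_sub]
    cases b with
    | zero =>
      have h0 : βc q 0 = 0 := by simp [βc]
      have h1 : r * q ^ (2 * a) * (q⁻¹ ^ (2 * a) * βc q (0 + 1)) - q * (q ^ 2 - q⁻¹ ^ 2) * r = 0 := by
        simp only [βc, inv_pow]
        field_simp
        ring
      rw [h0, h1]
      simp only [mul_zero, zero_mul, Finsupp.single_zero, add_zero]
      congr 1
      ring
    | succ b =>
      congr 1
      · congr 1; ring
      · congr 1
        simp only [βc, inv_pow]
        field_simp
        ring


noncomputable def ρ (hq0 : q ≠ 0) : Cq q →ₐ[ℂ] Module.End ℂ V :=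
  RingQuot.liftAlgHom ℂ ⟨ρfree q, relhold q hq0⟩

variable (hq0 : q ≠ 0)

lemma ρX : ρ q hq0 (X q) = Xop q := by
  rw [X, ρ, RingQuot.liftAlgHom_mkAlgHom_apply, ρfree_x]
lemma ρY : ρ q hq0 (Y q) = Yop q := by
  rw [Y, ρ, RingQuot.liftAlgHom_mkAlgHom_apply, ρfree_y]
lemma ρZ : ρ q hq0 (Z q) = Zop := by
  rw [Z, ρ, RingQuot.liftAlgHom_mkAlgHom_apply, ρfree_z]

noncomputable def NFl : Cq q →ₗ[ℂ] V where
  toFun u := ρ q hq0 u (Finsupp.single ((0:ℕ),(0:ℕ),(0:ℕ)) 1)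
  map_add' u v := by simp [map_add]
  map_smul' r u := by simp [map_smul]

lemma NFl_apply (u : Cq q) :
    NFl q hq0 u = ρ q hq0 u (Finsupp.single ((0:ℕ),(0:ℕ),(0:ℕ)) 1) := rfl

-- relations in Cq
lemma rZX : X q * Z q = (q^2 : ℂ) • (Z q * X q) := by
  have := RingQuot.mkAlgHom_rel ℂ (rel.xz (q := q))
  simpa only [map_mul, map_smul, X, Z] using this

lemma rXY : X q * Y q = Y q * X q - (q * (q ^ 2 - q⁻¹ ^ 2)) • (Z q * Z q) := by
  have := RingQuot.mkAlgHom_rel ℂ (rel.xy (q := q))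
  simpa only [map_mul, map_smul, map_sub, X, Y, Z] using this

lemma rZY : Y q * Z q = (q⁻¹^2 : ℂ) • (Z q * Y q) := by
  have := RingQuot.mkAlgHom_rel ℂ (rel.yz (q := q))
  simpa only [map_mul, map_smul, Y, Z] using this

lemma rYX : Y q * X q = X q * Y q + (q * (q ^ 2 - q⁻¹ ^ 2)) • (Z q * Z q) := by
  rw [rXY]
  abel

lemma pZX : ∀ a : ℕ, X q * Z q ^ a = (q^(2*a)) • (Z q ^ a * X q) := by
  intro a
  induction a with
  | zero => simp
  | succ a ih =>
    rw [pow_succ, ← mul_assoc, ih, smul_mul_assoc, mul_assoc, rZX, mul_smul_comm, smul_smul,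
      ← mul_assoc, ← pow_succ]
    congr 1
    ring

lemma pZY : ∀ a : ℕ, Y q * Z q ^ a = (q⁻¹^(2*a)) • (Z q ^ a * Y q) := by
  intro a
  induction a with
  | zero => simp
  | succ a ih =>
    rw [pow_succ, ← mul_assoc, ih, smul_mul_assoc, mul_assoc, rZY, mul_smul_comm, smul_smul,
      ← mul_assoc, ← pow_succ]
    congr 1
    ring

lemma pZXb : ∀ b : ℕ, X q ^ b * Z q = (q^(2*b)) • (Z q * X q ^ b) := by
  intro b
  induction b with
  | zero => simp
  | succ b ih =>
    rw [pow_succ, mul_assoc, rZX, mul_smul_comm, ← mul_assoc, ih, smul_mul_assoc, smul_smul,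
      mul_assoc]
    congr 1
    ring

lemma pZYc : ∀ c : ℕ, Y q ^ c * Z q = (q⁻¹^(2*c)) • (Z q * Y q ^ c) := by
  intro c
  induction c with
  | zero => simp
  | succ c ih =>
    rw [pow_succ, mul_assoc, rZY, mul_smul_comm, ← mul_assoc, ih, smul_mul_assoc, smul_smul,
      mul_assoc]
    congr 1
    ring

lemma rXZZ : X q * (Z q * Z q) = (q^4 : ℂ) • ((Z q * Z q) * X q) := by
  rw [← mul_assoc, rZX, smul_mul_assoc, mul_assoc, rZX, mul_smul_comm, smul_smul, ← mul_assoc]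
  congr 1
  ring

lemma rYZZ : Y q * (Z q * Z q) = (q⁻¹^4 : ℂ) • ((Z q * Z q) * Y q) := by
  rw [← mul_assoc, rZY, smul_mul_assoc, mul_assoc, rZY, mul_smul_comm, smul_smul, ← mul_assoc]
  congr 1
  ring

lemma pXZZ : ∀ b : ℕ, X q ^ b * (Z q * Z q) = (q^(4*b)) • ((Z q * Z q) * X q ^ b) := by
  intro b
  induction b with
  | zero => simp
  | succ b ih =>
    rw [pow_succ, mul_assoc, rXZZ, mul_smul_comm, ← mul_assoc, ih, smul_mul_assoc, smul_smul,
      mul_assoc]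
    congr 1
    ring

include hq0 in
lemma pXY : ∀ b : ℕ, Y q * X q ^ (b+1)
    = X q ^ (b+1) * Y q + (βc q (b+1)) • ((Z q * Z q) * X q ^ b) := by
  intro b
  induction b with
  | zero =>
    rw [pow_one, pow_zero, mul_one, rYX]
    congr 2
    simp only [βc]
    field_simp [hq0]
  | succ b ih =>
    rw [pow_succ, ← mul_assoc, ih, add_mul, smul_mul_assoc, mul_assoc, rYX, mul_add,
      mul_smul_comm, mul_assoc ((Z q * Z q)), ← pow_succ, ← mul_assoc (X q ^ (b+1)),
      ← pow_succ]
    rw [pXZZ, smul_smul, add_assoc, ← add_smul]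
    congr 2
    simp only [βc]
    field_simp [hq0]
    ring

include hq0 in
lemma pYX : ∀ c : ℕ, Y q ^ (c+1) * X q
    = X q * Y q ^ (c+1) + (γc q (c+1)) • ((Z q * Z q) * Y q ^ c) := by
  intro c
  induction c with
  | zero =>
    rw [pow_one, pow_zero, mul_one, rYX]
    congr 1
    congr 1
    simp only [γc]
    simp only [inv_pow]
    field_simp
    ring
  | succ c ih =>
    rw [pow_succ', mul_assoc, ih, mul_add, ← mul_assoc, rYX, add_mul, smul_mul_assoc,
      mul_assoc (X q), ← pow_succ', mul_smul_comm, ← mul_assoc, rYZZ, smul_mul_assoc,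
      smul_smul]
    rw [add_assoc, mul_assoc (Z q * Z q) (Y q), ← pow_succ', ← add_smul]
    congr 2
    simp only [γc]
    simp only [inv_pow]
    field_simp [hq0]
    ring


lemma hZZ (a : ℕ) : Z q ^ a * (Z q * Z q) = Z q ^ (a+2) := by
  rw [← pow_two, ← pow_add]

noncomputable def mono (p : Idx) : Cq q := Z q ^ p.1 * (X q ^ p.2.1 * Y q ^ p.2.2)

lemma mono_one : mono q (0,0,0) = 1 := by simp [mono]

lemma gZ (a b c : ℕ) : Z q * mono q (a,b,c) = mono q (a+1,b,c) := by
  simp only [mono]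
  rw [← mul_assoc, ← pow_succ']

lemma gX (a b c : ℕ) : X q * mono q (a,b,c) = (q^(2*a)) • mono q (a,b+1,c) := by
  simp only [mono]
  rw [← mul_assoc, pZX, smul_mul_assoc, mul_assoc, ← mul_assoc (X q), ← pow_succ']

include hq0 in
lemma gY (a b c : ℕ) : Y q * mono q (a,b,c)
    = (q⁻¹^(2*a)) • mono q (a,b,c+1) + (q⁻¹^(2*a) * βc q b) • mono q (a+2,b-1,c) := by
  cases b with
  | zero =>
    have h0 : βc q 0 = 0 := by simp [βc]
    simp only [mono, pow_zero, one_mul, h0, mul_zero, zero_smul, add_zero]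
    rw [← mul_assoc, pZY, smul_mul_assoc, mul_assoc, ← pow_succ']
  | succ b =>
    simp only [mono, Nat.add_sub_cancel]
    rw [← mul_assoc, pZY, smul_mul_assoc, mul_assoc, ← mul_assoc (Y q), pXY q hq0, add_mul,
      smul_mul_assoc, mul_assoc (X q ^ (b+1)), ← pow_succ', mul_assoc (Z q * Z q), mul_add,
      mul_smul_comm, smul_add, smul_smul, ← mul_assoc (Z q ^ a) (Z q * Z q) (X q ^ b * Y q ^ c), hZZ]

lemma rY (a b c : ℕ) : mono q (a,b,c) * Y q = mono q (a,b,c+1) := by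
  simp only [mono]
  rw [mul_assoc, mul_assoc, ← pow_succ]

lemma rZ (a b c : ℕ) : mono q (a,b,c) * Z q = (q^(2*b) * q⁻¹^(2*c)) • mono q (a+1,b,c) := by
  simp only [mono]
  rw [mul_assoc, mul_assoc, pZYc, mul_smul_comm, ← mul_assoc (X q ^ b), pZXb, smul_mul_assoc,
    mul_assoc, smul_smul, mul_smul_comm, ← mul_assoc, ← pow_succ]
  congr 1
  ring

include hq0 in
lemma rX (a b c : ℕ) : mono q (a,b,c) * X q
    = mono q (a,b+1,c) + (q^(4*b) * γc q c) • mono q (a+2,b,c-1) := by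
  cases c with
  | zero =>
    have h0 : γc q 0 = 0 := by simp [γc]
    simp only [mono, pow_zero, mul_one, h0, mul_zero, zero_smul, add_zero]
    rw [mul_assoc, ← pow_succ]
  | succ c =>
    simp only [mono, Nat.add_sub_cancel]
    rw [mul_assoc, mul_assoc, pYX q hq0, mul_add, mul_smul_comm, ← mul_assoc (X q ^ b) (X q),
      ← pow_succ, mul_add, mul_smul_comm]
    rw [← mul_assoc (X q ^ b) (Z q * Z q) (Y q ^ c), pXZZ, smul_mul_assoc,
      mul_assoc (Z q * Z q) (X q ^ b) (Y q ^ c), mul_smul_comm, smul_smul,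
      ← mul_assoc (Z q ^ a) (Z q * Z q) (X q ^ b * Y q ^ c), hZZ]
    congr 2
    ring

-- action on normal basis vectors
lemma YopPow (c : ℕ) :
    ((Yop q)^c) (Finsupp.single ((0:ℕ),(0:ℕ),(0:ℕ)) 1) = Finsupp.single ((0:ℕ),(0:ℕ),c) 1 := by
  induction c with
  | zero => simp
  | succ c ih =>
    rw [pow_succ', Module.End.mul_apply, ih, Yop_single]
    simp [βc]

lemma XopPow (b c : ℕ) :
    ((Xop q)^b) (Finsupp.single ((0:ℕ),(0:ℕ),c) 1) = Finsupp.single ((0:ℕ),b,c) 1 := by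
  induction b with
  | zero => simp
  | succ b ih =>
    rw [pow_succ', Module.End.mul_apply, ih, Xop_single]
    simp

lemma ZopPow (a b c : ℕ) :
    (Zop^a) (Finsupp.single ((0:ℕ),b,c) 1) = Finsupp.single (a,b,c) 1 := by
  induction a with
  | zero => simp
  | succ a ih =>
    rw [pow_succ', Module.End.mul_apply, ih, Zop_single]

lemma NF_mono (p : Idx) : NFl q hq0 (mono q p) = Finsupp.single p 1 := by
  obtain ⟨a, b, c⟩ := p
  rw [NFl_apply, mono, map_mul, map_mul, map_pow, map_pow, map_pow, ρX, ρY, ρZ,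
    Module.End.mul_apply, Module.End.mul_apply, YopPow, XopPow, ZopPow]

noncomputable def Mmap : V →ₗ[ℂ] Cq q := Finsupp.linearCombination ℂ (mono q)

lemma NF_M (f : V) : NFl q hq0 (Mmap q f) = f := by
  have h : (NFl q hq0).comp (Mmap q) = LinearMap.id := by
    apply Finsupp.lhom_ext
    intro p r
    simp only [LinearMap.comp_apply, Mmap, Finsupp.linearCombination_single, map_smul,
      NF_mono, LinearMap.id_apply, Finsupp.smul_single, smul_eq_mul, mul_one]
  calc NFl q hq0 (Mmap q f) = ((NFl q hq0).comp (Mmap q)) f := rfl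
    _ = f := by rw [h]; rfl

lemma adjoinXYZ (u : Cq q) : u ∈ Algebra.adjoin ℂ ({X q, Y q, Z q} : Set (Cq q)) := by
  obtain ⟨a, rfl⟩ := RingQuot.mkAlgHom_surjective ℂ (rel q) u
  induction a using FreeAlgebra.induction with
  | grade0 r =>
    rw [AlgHom.commutes]
    exact Subalgebra.algebraMap_mem _ r
  | grade1 t =>
    cases t with
    | x => exact Algebra.subset_adjoin (Or.inl rfl)
    | y => exact Algebra.subset_adjoin (Or.inr (Or.inl rfl))
    | z => exact Algebra.subset_adjoin (Or.inr (Or.inr rfl))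
  | mul a b ha hb => rw [map_mul]; exact mul_mem ha hb
  | add a b ha hb => rw [map_add]; exact add_mem ha hb

include hq0 in
lemma mul_mem_spanM (u : Cq q) :
    ∀ s ∈ Submodule.span ℂ (Set.range (mono q)), u * s ∈ Submodule.span ℂ (Set.range (mono q)) := by
  have hu := adjoinXYZ q u
  induction hu using Algebra.adjoin_induction with
  | mem g hg =>
    intro s hs
    induction hs using Submodule.span_induction with
    | mem t ht =>
      obtain ⟨p, rfl⟩ := ht
      obtain ⟨a, b, c⟩ := p
      simp only [Set.mem_insert_iff, Set.mem_singleton_iff] at hg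
      rcases hg with rfl | rfl | rfl
      · rw [gX]
        exact Submodule.smul_mem _ _ (Submodule.subset_span ⟨_, rfl⟩)
      · rw [gY q hq0]
        exact add_mem (Submodule.smul_mem _ _ (Submodule.subset_span ⟨_, rfl⟩))
          (Submodule.smul_mem _ _ (Submodule.subset_span ⟨_, rfl⟩))
      · rw [gZ]
        exact Submodule.subset_span ⟨_, rfl⟩
    | zero => simp
    | add x y _ _ hx hy => rw [mul_add]; exact add_mem hx hy
    | smul r x _ hx => rw [mul_smul_comm]; exact Submodule.smul_mem _ _ hx
  | algebraMap r =>
    intro s hs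
    rw [Algebra.algebraMap_eq_smul_one, smul_mul_assoc, one_mul]
    exact Submodule.smul_mem _ _ hs
  | add a b _ _ ha hb =>
    intro s hs
    rw [add_mul]
    exact add_mem (ha s hs) (hb s hs)
  | mul a b _ _ ha hb =>
    intro s hs
    rw [mul_assoc]
    exact ha _ (hb s hs)

include hq0 in
lemma M_surj : Function.Surjective (Mmap q) := by
  intro u
  have h1 : (1 : Cq q) ∈ Submodule.span ℂ (Set.range (mono q)) :=
    Submodule.subset_span ⟨(0,0,0), mono_one q⟩
  have := mul_mem_spanM q hq0 u 1 h1
  rw [mul_one] at this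
  rw [← Finsupp.range_linearCombination] at this
  exact this

lemma M_NF (u : Cq q) : Mmap q (NFl q hq0 u) = u := by
  obtain ⟨f, rfl⟩ := M_surj q hq0 u
  rw [NF_M]

lemma NF_inj {u v : Cq q} (h : NFl q hq0 u = NFl q hq0 v) : u = v := by
  rw [← M_NF q hq0 u, ← M_NF q hq0 v, h]


lemma Zr_single (p : Idx) (r : ℂ) :
    Zr q (Finsupp.single p r)
      = Finsupp.single (p.1+1, p.2.1, p.2.2) (r * (q ^ (2*p.2.1) * q⁻¹ ^ (2*p.2.2))) := by
  rw [Zr, Finsupp.linearCombination_single, Finsupp.smul_single, smul_eq_mul]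

lemma Xr1_single (p : Idx) (r : ℂ) :
    Xr1 (Finsupp.single p r) = Finsupp.single (p.1, p.2.1+1, p.2.2) r := by
  rw [Xr1, Finsupp.linearCombination_single, Finsupp.smul_single, smul_eq_mul, mul_one]

lemma Xr2_single (p : Idx) (r : ℂ) :
    Xr2 q (Finsupp.single p r)
      = Finsupp.single (p.1+2, p.2.1, p.2.2-1) (r * (q ^ (4*p.2.1) * γc q p.2.2)) := by
  rw [Xr2, Finsupp.linearCombination_single, Finsupp.smul_single, smul_eq_mul]

lemma Yr_single (p : Idx) (r : ℂ) :
    Yr (Finsupp.single p r) = Finsupp.single (p.1, p.2.1, p.2.2+1) r := by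
  rw [Yr, Finsupp.linearCombination_single, Finsupp.smul_single, smul_eq_mul, mul_one]

lemma NF_lZ (u : Cq q) : NFl q hq0 (Z q * u) = Zop (NFl q hq0 u) := by
  rw [NFl_apply, NFl_apply, map_mul, ρZ, Module.End.mul_apply]

lemma NF_lX (u : Cq q) : NFl q hq0 (X q * u) = Xop q (NFl q hq0 u) := by
  rw [NFl_apply, NFl_apply, map_mul, ρX, Module.End.mul_apply]

lemma NF_lY (u : Cq q) : NFl q hq0 (Y q * u) = Yop q (NFl q hq0 u) := by
  rw [NFl_apply, NFl_apply, map_mul, ρY, Module.End.mul_apply]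

include hq0 in
lemma NF_rZ (u : Cq q) : NFl q hq0 (u * Z q) = Zr q (NFl q hq0 u) := by
  have key : (NFl q hq0).comp ((LinearMap.mulRight ℂ (Z q)).comp (Mmap q))
      = (Zr q).comp ((NFl q hq0).comp (Mmap q)) := by
    apply Finsupp.lhom_ext
    rintro ⟨a,b,c⟩ r
    simp only [LinearMap.comp_apply, Mmap, Finsupp.linearCombination_single,
      LinearMap.mulRight_apply, smul_mul_assoc, map_smul, rZ, NF_mono, Zr_single,
      Finsupp.smul_single, smul_eq_mul, smul_smul]
    ring_nf
  have h2 := LinearMap.congr_fun key (NFl q hq0 u)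
  simp only [LinearMap.comp_apply, LinearMap.mulRight_apply, M_NF q hq0] at h2
  exact h2

include hq0 in
lemma NF_rY (u : Cq q) : NFl q hq0 (u * Y q) = Yr (NFl q hq0 u) := by
  have key : (NFl q hq0).comp ((LinearMap.mulRight ℂ (Y q)).comp (Mmap q))
      = Yr.comp ((NFl q hq0).comp (Mmap q)) := by
    apply Finsupp.lhom_ext
    rintro ⟨a,b,c⟩ r
    simp only [LinearMap.comp_apply, Mmap, Finsupp.linearCombination_single,
      LinearMap.mulRight_apply, smul_mul_assoc, map_smul, rY, NF_mono, Yr_single,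
      Finsupp.smul_single, smul_eq_mul, smul_smul]
  have h2 := LinearMap.congr_fun key (NFl q hq0 u)
  simp only [LinearMap.comp_apply, LinearMap.mulRight_apply, M_NF q hq0] at h2
  exact h2

include hq0 in
lemma NF_rX (u : Cq q) : NFl q hq0 (u * X q) = Xr1 (NFl q hq0 u) + Xr2 q (NFl q hq0 u) := by
  have key : (NFl q hq0).comp ((LinearMap.mulRight ℂ (X q)).comp (Mmap q))
      = (Xr1 + Xr2 q).comp ((NFl q hq0).comp (Mmap q)) := by
    apply Finsupp.lhom_ext
    rintro ⟨a,b,c⟩ r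
    simp only [LinearMap.comp_apply, Mmap, Finsupp.linearCombination_single,
      LinearMap.mulRight_apply, smul_mul_assoc, map_smul, rX q hq0, NF_mono,
      LinearMap.add_apply, Xr1_single, Xr2_single, Finsupp.smul_single, smul_eq_mul,
      smul_smul, map_add, smul_add]
    ring_nf
  have h2 := LinearMap.congr_fun key (NFl q hq0 u)
  simp only [LinearMap.comp_apply, LinearMap.mulRight_apply, LinearMap.add_apply,
    M_NF q hq0] at h2
  exact h2


include hq0 in
lemma qpow_inj (hq : ∀ k : ℕ, 0 < k → q ^ k ≠ 1) {m n : ℕ} (h : q ^ m = q ^ n) : m = n := by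
  rcases lt_trichotomy m n with hlt | he | hlt
  · exfalso
    apply hq (n - m) (by omega)
    have h2 : q ^ m * q ^ (n - m) = q ^ m * 1 := by
      rw [← pow_add, mul_one, h]
      congr 1
      omega
    exact mul_left_cancel₀ (pow_ne_zero _ hq0) h2
  · exact he
  · exfalso
    apply hq (m - n) (by omega)
    have h2 : q ^ n * q ^ (m - n) = q ^ n * 1 := by
      rw [← pow_add, mul_one, ← h]
      congr 1
      omega
    exact mul_left_cancel₀ (pow_ne_zero _ hq0) h2

include hq0 in
lemma vanish (hq : ∀ k : ℕ, 0 < k → q ^ k ≠ 1) (f : V)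
    (hZc : Zop f = Zr q f)
    (hXc : Xop q f = Xr1 f + Xr2 q f)
    (hprof : ∀ b, f (0,b,b) = 0) : f = 0 := by
  have offdiag : ∀ A B C : ℕ, B ≠ C → f (A,B,C) = 0 := by
    intro A B C hBC
    have h := DFunLike.congr_fun hZc (A+1,B,C)
    rw [Zop_apply_succ, Zr_apply_succ] at h
    by_cases hf : f (A,B,C) = 0
    · exact hf
    · exfalso
      have h3 : (q ^ (2*B) * q⁻¹ ^ (2*C) - 1) * f (A,B,C) = 0 := by
        rw [sub_mul, one_mul, ← h, sub_self]
      have h1 : q ^ (2*B) * q⁻¹ ^ (2*C) = 1 := by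
        rcases mul_eq_zero.mp h3 with h4 | h4
        · exact sub_eq_zero.mp h4
        · exact absurd h4 hf
      rw [inv_pow, mul_inv_eq_one₀ (pow_ne_zero _ hq0)] at h1
      have := qpow_inj q hq0 hq h1
      omega
  have main : ∀ A B C : ℕ, f (A,B,C) = 0 := by
    intro A
    induction A using Nat.strong_induction_on with
    | _ A ih =>
      rcases A with _ | A
      · intro B C
        rcases eq_or_ne B C with rfl | h
        · exact hprof B
        · exact offdiag 0 B C h
      rcases A with _ | A
      · intro B C
        have h := DFunLike.congr_fun hXc (1, B+1, C)
        rw [Xop_apply_succ, Finsupp.add_apply, Xr1_apply_succ, Xr2_apply_one] at h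
        have h2 : (q ^ (2*1) - 1) * f (1,B,C) = 0 := by
          rw [sub_mul, one_mul, h]
          ring
        rcases mul_eq_zero.mp h2 with h4 | h4
        · exact absurd (sub_eq_zero.mp h4) (hq 2 (by norm_num))
        · exact h4
      · intro B C
        have h := DFunLike.congr_fun hXc (A+2, B+1, C)
        rw [Xop_apply_succ, Finsupp.add_apply, Xr1_apply_succ, Xr2_apply_succ,
          ih A (by omega) (B+1) (C+1)] at h
        have h2 : (q ^ (2*(A+2)) - 1) * f (A+2,B,C) = 0 := by
          rw [sub_mul, one_mul, h]
          ring
        rcases mul_eq_zero.mp h2 with h4 | h4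
        · exact absurd (sub_eq_zero.mp h4) (hq (2*(A+2)) (by omega))
        · exact h4
  ext p
  obtain ⟨a,b,c⟩ := p
  simp [main a b c]

include hq0 in
lemma ρ_pq (g : V) : ρ q hq0 (pq q) g = q⁻¹ • (Xop q) ((Yop q) g) + q^2 • Zop (Zop g) := by
  rw [pq, map_add, map_smul, map_smul, map_mul, map_mul, ρX, ρY, ρZ]
  simp [Module.End.mul_apply]

include hq0 in
lemma NF_pq_pow (n : ℕ) : ∀ B C : ℕ, NFl q hq0 ((pq q)^n) (0, B, C)
    = if B = n ∧ C = n then (q⁻¹)^n else 0 := by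
  induction n with
  | zero =>
    intro B C
    have h1 : NFl q hq0 ((pq q)^0) = Finsupp.single ((0:ℕ),(0:ℕ),(0:ℕ)) 1 := by
      rw [pow_zero, NFl_apply, map_one, Module.End.one_apply]
    rw [h1, Finsupp.single_apply]
    by_cases h : B = 0 ∧ C = 0
    · obtain ⟨rfl, rfl⟩ := h
      simp
    · rw [if_neg, if_neg h]
      simp only [Prod.mk.injEq]
      omega
  | succ n ihn =>
    intro B C
    have hstep : NFl q hq0 ((pq q)^(n+1)) = ρ q hq0 (pq q) (NFl q hq0 ((pq q)^n)) := by
      rw [NFl_apply, pow_succ', map_mul, Module.End.mul_apply, ← NFl_apply]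
    rw [hstep, ρ_pq]
    rw [Finsupp.add_apply, Finsupp.smul_apply, Finsupp.smul_apply, Zop_apply_zero,
      smul_zero, add_zero]
    rcases B with _ | B
    · rw [Xop_apply_zero, smul_zero, if_neg (by omega)]
    rcases C with _ | C
    · rw [Xop_apply_succ, Yop, LinearMap.add_apply, Finsupp.add_apply, Yop1_apply_zero,
        Yop2_apply_zero, if_neg (by omega)]
      simp
    · rw [Xop_apply_succ, Yop, LinearMap.add_apply, Finsupp.add_apply, Yop1_apply_succ,
        Yop2_apply_zero, add_zero, ihn]
      by_cases h : B = n ∧ C = n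
      · obtain ⟨rfl, rfl⟩ := h
        rw [if_pos ⟨rfl, rfl⟩, if_pos ⟨rfl, rfl⟩]
        simp [pow_succ]
        ring
      · rw [if_neg h, if_neg (by omega)]
        simp


include hq0 in
lemma NF_pq : NFl q hq0 (pq q)
    = q⁻¹ • Finsupp.single ((0:ℕ),(1:ℕ),(1:ℕ)) 1
      + q ^ 2 • Finsupp.single ((2:ℕ),(0:ℕ),(0:ℕ)) 1 := by
  have hY : (Yop q) (Finsupp.single ((0:ℕ),(0:ℕ),(0:ℕ)) 1)
      = Finsupp.single ((0:ℕ),(0:ℕ),(1:ℕ)) 1 := by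
    have := YopPow q 1
    rwa [pow_one] at this
  rw [NFl_apply, ρ_pq, hY, Xop_single, Zop_single, Zop_single]
  norm_num

include hq0 in
lemma pq_comm_Z : Z q * pq q = pq q * Z q := by
  apply NF_inj q hq0
  rw [NF_lZ, NF_rZ q hq0, NF_pq, map_add, map_add, map_smul, map_smul, map_smul, map_smul,
    Zop_single, Zop_single, Zr_single, Zr_single]
  congr 1 <;> congr 1 <;> field_simp <;> simp [hq0]

include hq0 in
lemma pq_comm_X : X q * pq q = pq q * X q := by
  apply NF_inj q hq0
  rw [NF_lX, NF_rX q hq0, NF_pq, map_add, map_add, map_add, map_smul, map_smul, map_smul,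
    map_smul, map_smul, map_smul, Xop_single, Xop_single, Xr1_single, Xr1_single,
    Xr2_single, Xr2_single]
  have h0 : γc q 0 = 0 := by simp [γc]
  rw [h0]
  simp only [mul_zero, Finsupp.single_zero, smul_zero, add_zero]
  rw [add_assoc]
  congr 1
  · norm_num
  · simp only [Finsupp.smul_single, smul_eq_mul]
    rw [← Finsupp.single_add]
    congr 1
    simp only [γc]
    simp only [inv_pow]
    field_simp
    ring

include hq0 in
lemma pq_comm_Y : Y q * pq q = pq q * Y q := by
  apply NF_inj q hq0
  rw [NF_lY, NF_rY q hq0, NF_pq, map_add, map_add, map_smul, map_smul, map_smul, map_smul,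
    Yop_single, Yop_single, Yr_single, Yr_single]
  have h0 : βc q 0 = 0 := by simp [βc]
  rw [h0]
  simp only [mul_zero, Finsupp.single_zero, smul_add, add_zero]
  rw [add_assoc]
  congr 1
  · norm_num
  · simp only [Finsupp.smul_single, smul_eq_mul]
    rw [← Finsupp.single_add]
    congr 1
    simp only [βc]
    simp only [inv_pow]
    field_simp
    ring

include hq0 in
lemma pq_mem_center : pq q ∈ Subalgebra.center ℂ (Cq q) := by
  rw [Subalgebra.mem_center_iff]
  intro b
  have hb := adjoinXYZ q b
  induction hb using Algebra.adjoin_induction with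
  | mem g hg =>
    simp only [Set.mem_insert_iff, Set.mem_singleton_iff] at hg
    rcases hg with rfl | rfl | rfl
    · exact pq_comm_X q hq0
    · exact pq_comm_Y q hq0
    · exact pq_comm_Z q hq0
  | algebraMap r => exact Algebra.commutes r (pq q)
  | add a b _ _ ha hb => rw [add_mul, mul_add, ha, hb]
  | mul a b _ _ ha hb => rw [mul_assoc, hb, ← mul_assoc, ha, mul_assoc]

include hq0 in
lemma center_le_adjoin (hq : ∀ k : ℕ, 0 < k → q ^ k ≠ 1) :
    Subalgebra.center ℂ (Cq q) ≤ Algebra.adjoin ℂ {pq q} := by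
  intro u hu
  classical
  set f := NFl q hq0 u with hf
  set N := f.support.sup (fun t => t.2.1) + 1 with hN
  set v := ∑ b ∈ Finset.range N, (q ^ b * f (0,b,b)) • (pq q) ^ b with hv
  have hvadj : v ∈ Algebra.adjoin ℂ {pq q} := by
    apply sum_mem
    intro b _
    exact Subalgebra.smul_mem _ (Subalgebra.pow_mem _ (Algebra.self_mem_adjoin_singleton ℂ _) b) _
  have hvc : v ∈ Subalgebra.center ℂ (Cq q) := by
    apply sum_mem
    intro b _
    exact Subalgebra.smul_mem _ (Subalgebra.pow_mem _ (pq_mem_center q hq0) b) _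
  have hw : u - v ∈ Subalgebra.center ℂ (Cq q) := sub_mem hu hvc
  have hNFv : ∀ b : ℕ, NFl q hq0 v (0,b,b) = if b < N then f (0,b,b) else 0 := by
    intro b
    rw [hv, map_sum, Finsupp.finset_sum_apply]
    have hterm : ∀ k ∈ Finset.range N,
        (NFl q hq0 ((q ^ k * f (0,k,k)) • (pq q) ^ k)) (0,b,b)
          = if b = k then q ^ k * f (0,k,k) * q⁻¹ ^ k else 0 := by
      intro k _
      rw [map_smul, Finsupp.smul_apply, NF_pq_pow q hq0, smul_eq_mul]
      simp only [and_self, mul_ite, mul_zero]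
    rw [Finset.sum_congr rfl hterm, Finset.sum_ite_eq (Finset.range N) b]
    simp only [Finset.mem_range]
    split_ifs with hb
    · rw [mul_right_comm, ← mul_pow, mul_inv_cancel₀ hq0, one_pow, one_mul]
    · rfl
  have hprof : ∀ b : ℕ, NFl q hq0 (u - v) (0,b,b) = 0 := by
    intro b
    rw [map_sub, Finsupp.sub_apply, hNFv, ← hf]
    split_ifs with hb
    · rw [sub_self]
    · rw [sub_zero]
      by_contra hne
      have hmem : ((0:ℕ),b,b) ∈ f.support := Finsupp.mem_support_iff.mpr hne
      have := Finset.le_sup (f := fun t : Idx => t.2.1) hmem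
      simp only at this
      omega
  have hcomm := Subalgebra.mem_center_iff.mp hw
  have hZc : Zop (NFl q hq0 (u - v)) = Zr q (NFl q hq0 (u - v)) := by
    rw [← NF_lZ, hcomm (Z q), NF_rZ q hq0]
  have hXc : Xop q (NFl q hq0 (u - v)) = Xr1 (NFl q hq0 (u - v)) + Xr2 q (NFl q hq0 (u - v)) := by
    rw [← NF_lX, hcomm (X q), NF_rX q hq0]
  have hz := vanish q hq0 hq _ hZc hXc hprof
  have huv : u - v = 0 := by
    apply NF_inj q hq0
    rw [hz, map_zero]
  have : u = v := by
    have := sub_eq_zero.mp huv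
    exact this
  rw [this]
  exact hvadj

end CqProof


open CqXYZ in
/-- for `q` not a root of unity, the center of `ℂ_q[x,y,z]` equals the unital
subalgebra generated by `p_q = q⁻¹xy + q²z²`. -/
theorem center_Cq_eq_adjoin_pq (q : ℂ) (hq0 : q ≠ 0)
    (hq : ∀ k : ℕ, 0 < k → q ^ k ≠ 1) :
    Subalgebra.center ℂ (Cq q) = Algebra.adjoin ℂ {pq q} := by
  apply le_antisymm
  · exact CqProof.center_le_adjoin q hq0 hq
  · apply Algebra.adjoin_le
    rw [Set.singleton_subset_iff]
    exact CqProof.pq_mem_center q hq0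
end
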